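/- For any subset A of ℝ, if the closure of ℝ\A in (ℝ, τ_A) is countable, then the Hattori space (ℝ, τ_A) is σ-compact. -/

import Mathlib

open Set

def hattori (A : Set ℝ) : TopologicalSpace ℝ where
  IsOpen U := ∀ x ∈ U, ∃ ε > (0 : ℝ),
    (x ∈ A → Ioo (x - ε) (x + ε) ⊆ U) ∧ (x ∉ A → Ico x (x + ε) ⊆ U)
  isOpen_univ := fun x _ => ⟨1, one_pos, fun _ => subset_univ _, fun _ => subset_univ _⟩
  isOpen_inter := by
    intro U V hU hV x hx
    obtain ⟨ε₁, hε₁, h₁, h₁'⟩ := hU x hx.1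
    obtain ⟨ε₂, hε₂, h₂, h₂'⟩ := hV x hx.2
    have l1 := min_le_left ε₁ ε₂
    have l2 := min_le_right ε₁ ε₂
    refine ⟨min ε₁ ε₂, lt_min hε₁ hε₂, fun hA => ?_, fun hA => ?_⟩
    · intro y hy
      exact ⟨h₁ hA ⟨by linarith [hy.1], by linarith [hy.2]⟩,
             h₂ hA ⟨by linarith [hy.1], by linarith [hy.2]⟩⟩
    · intro y hy
      exact ⟨h₁' hA ⟨hy.1, by linarith [hy.2]⟩, h₂' hA ⟨hy.1, by linarith [hy.2]⟩⟩
  isOpen_sUnion := by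
    intro S hS x hx
    obtain ⟨U, hU, hxU⟩ := hx
    obtain ⟨ε, hε, h, h'⟩ := hS U hU x hxU
    exact ⟨ε, hε, fun hA => (h hA).trans (subset_sUnion_of_mem hU),
      fun hA => (h' hA).trans (subset_sUnion_of_mem hU)⟩

def sorgenfrey : TopologicalSpace ℝ :=
  TopologicalSpace.generateFrom {S | ∃ a b : ℝ, S = Ico a b}

/-- Euclidean-compact subsets of `A` are compact in the Hattori topology. -/
lemma hattori_isCompact_of_subset (A K : Set ℝ) (hKA : K ⊆ A) (hK : IsCompact K) :
    @IsCompact ℝ (hattori A) K := by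
  classical
  refine @isCompact_of_finite_subcover ℝ (hattori A) K ?_
  intro ι U hUopen hcover
  choose i hi using fun x : K => mem_iUnion.1 (hcover x.2)
  have hxA : ∀ x : K, (x : ℝ) ∈ A := fun x => hKA x.2
  have key : ∀ x : K, ∃ ε > (0:ℝ), Ioo ((x:ℝ) - ε) ((x:ℝ) + ε) ⊆ U (i x) := by
    intro x
    obtain ⟨ε, hε, h1, _⟩ := hUopen (i x) (x : ℝ) (hi x)
    exact ⟨ε, hε, h1 (hxA x)⟩
  choose ε hε hsub using key
  have hVcover : K ⊆ ⋃ x : K, Ioo ((x:ℝ) - ε x) ((x:ℝ) + ε x) := by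
    intro y hy
    refine mem_iUnion.2 ⟨⟨y, hy⟩, ?_, ?_⟩ <;> simp <;> linarith [hε ⟨y, hy⟩]
  obtain ⟨t, ht⟩ := hK.elim_finite_subcover _ (fun x : K => isOpen_Ioo) hVcover
  refine ⟨t.image i, fun y hy => ?_⟩
  obtain ⟨x, hxt, hyx⟩ := mem_iUnion₂.1 (ht hy)
  exact mem_iUnion₂.2 ⟨i x, Finset.mem_image_of_mem i hxt, hsub x hyx⟩

theorem stmt12 (A : Set ℝ) (h : (@closure ℝ (hattori A) Aᶜ).Countable) :
    @SigmaCompactSpace ℝ (hattori A) := by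
  classical
  set F : Set ℝ := @closure ℝ (hattori A) Aᶜ with hF
  set U : Set ℝ := Fᶜ with hUdef
  -- U ⊆ A
  have hsubF : Aᶜ ⊆ F := @subset_closure ℝ (hattori A) Aᶜ
  have hUA : U ⊆ A := by
    intro x hx
    by_contra hxA
    exact hx (hsubF hxA)
  -- U is Hattori-open
  have hUho : (hattori A).IsOpen U := by
    have : @IsOpen ℝ (hattori A) U := (@isClosed_closure ℝ (hattori A) Aᶜ).isOpen_compl
    exact this
  -- U is Euclidean-open
  have hUopen : IsOpen U := by
    rw [Metric.isOpen_iff]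
    intro x hx
    obtain ⟨ε, hε, h1, _⟩ := hUho x hx
    exact ⟨ε, hε, by rw [Real.ball_eq_Ioo]; exact h1 (hUA hx)⟩
  have hFclosed : IsClosed F := by simpa [hUdef] using hUopen.isClosed_compl
  rcases eq_empty_or_nonempty F with hFe | hFne
  · -- F empty : A = univ
    have hAuniv : A = univ := by
      have : Aᶜ = ∅ := eq_empty_of_subset_empty (hFe ▸ hsubF)
      simpa [compl_empty_iff] using this
    have hsig : @IsSigmaCompact ℝ (hattori A) univ := ?_
    · exact @SigmaCompactSpace.mk ℝ (hattori A) hsig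
    refine ⟨fun n => Icc (-(n:ℝ)) n, fun n => ?_, ?_⟩
    · exact hattori_isCompact_of_subset A _ (by simp [hAuniv]) isCompact_Icc
    · ext x
      simp only [mem_iUnion, mem_Icc, mem_univ, iff_true]
      obtain ⟨n, hn⟩ := exists_nat_ge |x|
      have h2 := abs_le.1 hn
      exact ⟨n, by constructor <;> linarith [h2.1, h2.2]⟩
  · obtain ⟨f, hfF⟩ := h.exists_eq_range hFne
    set K : ℕ → Set ℝ := fun n =>
      Icc (-(n:ℝ)) n ∩ {x | 1/(n+1) ≤ Metric.infDist x F} with hK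
    have hKcomp : ∀ n, IsCompact (K n) := by
      intro n
      apply isCompact_Icc.inter_right
      exact isClosed_le continuous_const ((Metric.continuous_infDist_pt F).comp continuous_id)
    have hKU : ∀ n, K n ⊆ U := by
      intro n x hx
      intro hxF
      have h0 : Metric.infDist x F = 0 := Metric.infDist_zero_of_mem hxF
      have := hx.2
      rw [mem_setOf_eq, h0] at this
      have hp : (0:ℝ) < 1/(n+1) := by positivity
      linarith
    have hsig : @IsSigmaCompact ℝ (hattori A) univ := ?_
    · exact @SigmaCompactSpace.mk ℝ (hattori A) hsig
    refine ⟨fun n => {f n} ∪ K n, fun n => ?_, ?_⟩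
    · have h1 : @IsCompact ℝ (hattori A) {f n} := @isCompact_singleton ℝ (hattori A) (f n)
      exact @IsCompact.union ℝ (hattori A) _ _ h1
        (hattori_isCompact_of_subset A _ ((hKU n).trans hUA) (hKcomp n))
    · apply eq_univ_of_forall
      intro x
      by_cases hxF : x ∈ F
      · rw [hfF] at hxF
        obtain ⟨n, hn⟩ := hxF
        exact mem_iUnion.2 ⟨n, Or.inl (by simp [hn])⟩
      · have hd : 0 < Metric.infDist x F :=
          (hFclosed.notMem_iff_infDist_pos hFne).1 hxF
        obtain ⟨n₁, hn₁⟩ := exists_nat_one_div_lt hd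
        obtain ⟨n₂, hn₂⟩ := exists_nat_ge |x|
        refine mem_iUnion.2 ⟨max n₁ n₂, Or.inr ⟨?_, ?_⟩⟩
        · have := abs_le.1 hn₂
          have h2 : (n₂:ℝ) ≤ max n₁ n₂ := Nat.cast_le.2 (le_max_right _ _)
          constructor <;> linarith
        · have h1 : ((n₁:ℝ)+1) ≤ ((max n₁ n₂ : ℕ):ℝ)+1 := by
            have : (n₁:ℝ) ≤ ((max n₁ n₂ : ℕ):ℝ) := Nat.cast_le.2 (le_max_left _ _)
            linarith
          have h3 : (1:ℝ)/(((max n₁ n₂ : ℕ):ℝ)+1) ≤ 1/((n₁:ℝ)+1) :=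
            one_div_le_one_div_of_le (by positivity) h1
          exact le_trans h3 hn₁.le
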